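/- arXiv:2301.05390 — 7 statements merged into one kernel-verified Lean document; each statement's English description precedes it below -/
import Mathlib

section
/- Let α ∈ ℂ and x ∈ ℂ with |x| = 1 and x ≠ α. Define y±(x) = -(x² - αx)·(1/2 ± √(1/4 - 1/(x(x-α)²))), using the principal branch of the square root. Then |y₋(x)| ≤ 1 ≤ |y₊(x)|. -/
/-- Principal-branch square root via complex power. -/
noncomputable def csqrt (z : ℂ) : ℂ := z ^ ((1:ℂ)/2)

lemma csqrt_sq (z : ℂ) : csqrt z ^ 2 = z := by
  have h := Complex.cpow_nat_inv_pow z (n := 2) (by norm_num)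
  simpa [csqrt, one_div] using h

lemma csqrt_re_nonneg (z : ℂ) : 0 ≤ (csqrt z).re := by
  rcases eq_or_ne z 0 with rfl | hz
  · simp [csqrt, Complex.zero_cpow (by norm_num : (1:ℂ)/2 ≠ 0)]
  · rw [csqrt, Complex.cpow_def_of_ne_zero hz, Complex.exp_re]
    have him : (Complex.log z * ((1:ℂ)/2)).im = Complex.arg z / 2 := by
      simp [Complex.mul_im, Complex.log_im]
      ring
    rw [him]
    have h1 := Complex.arg_le_pi z
    have h2 := Complex.neg_pi_lt_arg z
    have hcos : 0 ≤ Real.cos (Complex.arg z / 2) := by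
      apply Real.cos_nonneg_of_mem_Icc
      constructor <;> [linarith; linarith]
    positivity

theorem stmt_0 (α x : ℂ) (hx : ‖x‖ = 1) (hxa : x ≠ α) :
    ‖(-(x^2 - α*x) * (1/2 - csqrt (1/4 - 1/(x*(x-α)^2))))‖ ≤ 1 ∧
    1 ≤ ‖(-(x^2 - α*x) * (1/2 + csqrt (1/4 - 1/(x*(x-α)^2))))‖ := by
  have hx0 : x ≠ 0 := by
    intro h; rw [h] at hx; simp at hx
  have hxma : x - α ≠ 0 := sub_ne_zero.mpr hxa
  set s := csqrt (1/4 - 1/(x*(x-α)^2)) with hs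
  have hsq : s ^ 2 = 1/4 - 1/(x*(x-α)^2) := csqrt_sq _
  have hprod : (-(x^2 - α*x) * (1/2 - s)) * (-(x^2 - α*x) * (1/2 + s)) = x := by
    have : (-(x^2 - α*x) * (1/2 - s)) * (-(x^2 - α*x) * (1/2 + s))
        = (x^2 - α*x)^2 * (1/4 - s^2) := by ring
    rw [this, hsq]
    field_simp
    ring
  have hre : 0 ≤ s.re := csqrt_re_nonneg _
  have hle12 : ‖(1/2 - s)‖ ≤ ‖(1/2 + s)‖ := by
    have h1 : Complex.normSq (1/2 - s) ≤ Complex.normSq (1/2 + s) := by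
      simp only [Complex.normSq_apply, Complex.sub_re, Complex.sub_im,
        Complex.add_re, Complex.add_im, Complex.one_re, Complex.one_im,
        Complex.div_ofNat_re, Complex.div_ofNat_im]
      nlinarith [hre]
    rw [Complex.norm_def, Complex.norm_def]; exact Real.sqrt_le_sqrt h1
  have hle : ‖(-(x^2 - α*x) * (1/2 - s))‖ ≤
      ‖(-(x^2 - α*x) * (1/2 + s))‖ := by
    rw [norm_mul, norm_mul]
    exact mul_le_mul_of_nonneg_left hle12 (norm_nonneg _)
  have habs : ‖(-(x^2 - α*x) * (1/2 - s))‖ *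
      ‖(-(x^2 - α*x) * (1/2 + s))‖ = 1 := by
    rw [← norm_mul, hprod, hx]
  constructor
  · nlinarith [norm_nonneg (-(x^2 - α*x) * (1/2 - s)),
      norm_nonneg (-(x^2 - α*x) * (1/2 + s))]
  · nlinarith [norm_nonneg (-(x^2 - α*x) * (1/2 - s)),
      norm_nonneg (-(x^2 - α*x) * (1/2 + s))]
end

section
/- For α ∈ (-1, 1), if t ∈ ℝ satisfies cos t = (α+1)/2, then e^{it}(e^{it} - α)² = α - 1 (a negative real number). -/
theorem stmt_6 (α t : ℝ) (hα : α ∈ Set.Ioo (-1:ℝ) 1)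
    (ht : Real.cos t = (α + 1)/2) :
    Complex.exp (t * Complex.I) * (Complex.exp (t * Complex.I) - (α:ℂ))^2 = ((α : ℂ) - 1)
      ∧ α - 1 < 0 := by
  constructor
  · have h1 : Complex.exp (t * Complex.I) + Complex.exp (-t * Complex.I) = (α:ℂ) + 1 := by
      have h := Complex.two_cos (t : ℂ)
      rw [← Complex.ofReal_cos, ht] at h
      push_cast at h
      linear_combination -h
    have h2 : Complex.exp (t * Complex.I) * Complex.exp (-t * Complex.I) = 1 := by
      rw [← Complex.exp_add]; ring_nf; exact Complex.exp_zero
    have hz : Complex.exp (t * Complex.I) ^ 2 + 1 = ((α:ℂ) + 1) * Complex.exp (t * Complex.I) := by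
      linear_combination Complex.exp (t * Complex.I) * h1 - h2
    linear_combination (Complex.exp (t * Complex.I) - ((α:ℂ) - 1)) * hz
  · linarith [hα.2]
end

section
/- For λ ∈ (1, 2), the polynomial p_λ(x) = x(λ² - x)(x² + (4/λ - λ²)x + 4/λ²) satisfies p_λ(x) < 0 for all x ∈ (-1, 0). -/
theorem stmt_11 (l : ℝ) (hl : l ∈ Set.Ioo (1:ℝ) 2) (x : ℝ) (hx : x ∈ Set.Ioo (-1:ℝ) 0) :
    x * (l^2 - x) * (x^2 + (4/l - l^2)*x + 4/l^2) < 0 := by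
  obtain ⟨hl1, hl2⟩ := hl
  obtain ⟨hx1, hx2⟩ := hx
  have hl0 : (0:ℝ) < l := by linarith
  have hl2p : 0 < l^2 := pow_pos hl0 2
  have h1 : x * (l^2 - x) < 0 := mul_neg_of_neg_of_pos hx2 (by nlinarith)
  have h2 : 0 < x^2 + (4/l - l^2)*x + 4/l^2 := by
    rw [show x^2 + (4/l - l^2)*x + 4/l^2 = (x^2*l^2 + (4*l - l^2*l^2)*x + 4)/l^2 by
      field_simp, lt_div_iff₀ hl2p]
    nlinarith [sq_nonneg (2*l*x + 4 - l^3), mul_pos (pow_pos hl0 3) (by nlinarith : (0:ℝ) < 8 - l^3)]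
  exact mul_neg_of_neg_of_pos h1 h2
end

section
/- For λ ∈ (1, 2), the polynomial p_λ(x) = x(λ² - x)(x² + (4/λ - λ²)x + 4/λ²) satisfies p_λ(x) > 0 for all x ∈ (0, 1] and for all x ∈ (0, λ²). -/
theorem stmt_12 (l : ℝ) (hl : l ∈ Set.Ioo (1:ℝ) 2) :
    (∀ x ∈ Set.Ioc (0:ℝ) 1, 0 < x * (l^2 - x) * (x^2 + (4/l - l^2)*x + 4/l^2)) ∧
    (∀ x ∈ Set.Ioo (0:ℝ) (l^2), 0 < x * (l^2 - x) * (x^2 + (4/l - l^2)*x + 4/l^2)) := by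
  obtain ⟨hl1, hl2⟩ := hl
  have hl0 : (0:ℝ) < l := by linarith
  have hquad : ∀ x : ℝ, 0 < x^2 + (4/l - l^2)*x + 4/l^2 := by
    intro x
    have hc : l^3 < 8 := by nlinarith [mul_pos (show (0:ℝ)<2-l by linarith) (show (0:ℝ)<4+2*l+l^2 by positivity)]
    have hp : (0:ℝ) < l^3 := by positivity
    have h1 : (0:ℝ) < l^3 * (8 - l^3) := by nlinarith
    have h2 : (0:ℝ) ≤ (2*l*x + 4 - l^3)^2 := sq_nonneg _
    have key : 0 < 4*l^2 * (x^2 + (4/l - l^2)*x + 4/l^2) := by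
      have e : 4*l^2 * (x^2 + (4/l - l^2)*x + 4/l^2)
          = (2*l*x + 4 - l^3)^2 + l^3*(8 - l^3) := by
        field_simp
        ring
      rw [e]; linarith
    nlinarith [sq_nonneg l]
  constructor
  · intro x ⟨hx0, hx1⟩
    have hxl : x < l^2 := by nlinarith
    exact mul_pos (mul_pos hx0 (by linarith)) (hquad x)
  · intro x ⟨hx0, hx1⟩
    exact mul_pos (mul_pos hx0 (by linarith)) (hquad x)
end

section
/- Let λ ∈ (1,2), p_λ(x) = x(λ² - x)(x² + (4/λ - λ²)x + 4/λ²), and φ(x) = (λ² - x)/(λx + 1). Then for all real x with λx + 1 ≠ 0, p_λ(φ(x))·(φ'(x))⁻² = p_λ(x), i.e., (φ'(x))² · p_λ(x) = p_λ(φ(x)). -/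
/-- The quartic p_λ(x) = x(λ² - x)(x² + (4/λ - λ²)x + 4/λ²). -/
noncomputable def pLam (l x : ℝ) : ℝ := x * (l^2 - x) * (x^2 + (4/l - l^2)*x + 4/l^2)

/-- The Möbius transformation φ(x) = (λ² - x)/(λx + 1). -/
noncomputable def moebius (l x : ℝ) : ℝ := (l^2 - x)/(l*x + 1)

theorem stmt_14 (l : ℝ) (hl : l ∈ Set.Ioo (1:ℝ) 2) (x : ℝ) (hx : l*x + 1 ≠ 0) :
    (-(l^3 + 1)/(l*x + 1)^2)^2 * pLam l x = pLam l (moebius l x) := by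
  have hl0 : l ≠ 0 := by have := hl.1; linarith
  unfold pLam moebius
  field_simp
  ring
end

section
/- For α ∈ (-1, 3), the points of intersection of the curve Q_α(x,y) = y² + (x²-αx)y + x = 0 with the 2-torus {(x,y) : |x|=|y|=1} are exactly the points (e^{it}, y) with t ∈ {0, c(α), -c(α)} where c(α) = arccos((α-1)/2), and y a root of the quadratic y² + (e^{2it} - αe^{it})y + e^{it} = 0. In particular, every toric point (x,y) satisfies x ∈ {1, e^{ic(α)}, e^{-ic(α)}}. -/
open Complex

private lemma key_abs' (α : ℝ) (x y : ℂ) (hx : ‖x‖ = 1)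
    (hc : x^3 - (α:ℂ)*x^2 + (α:ℂ)*x - 1 = 0)
    (hb : ‖x^2 - (α:ℂ)*x‖ < 2)
    (hq : y^2 + (x^2 - (α:ℂ)*x)*y + x = 0) : ‖y‖ = 1 := by
  have hy0 : y ≠ 0 := by
    intro h
    rw [h] at hq
    simp at hq
    rw [hq] at hx
    simp at hx
  have hxu : x * (starRingEnd ℂ) x = 1 := by
    rw [Complex.mul_conj]
    norm_cast
    rw [Complex.normSq_eq_norm_sq, hx]; norm_num
  have hq2 : (starRingEnd ℂ) y ^ 2
      + ((starRingEnd ℂ) x ^ 2 - (α:ℂ) * (starRingEnd ℂ) x) * (starRingEnd ℂ) y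
      + (starRingEnd ℂ) x = 0 := by
    have h := congrArg (starRingEnd ℂ) hq
    simpa [map_add, map_mul, map_pow, map_sub, Complex.conj_ofReal] using h
  have hu : (starRingEnd ℂ) x = x^2 - (α:ℂ)*x + (α:ℂ) := by
    linear_combination (-(starRingEnd ℂ) x) * hc + (x^2 - (α:ℂ)*x + (α:ℂ)) * hxu
  rw [hu] at hq2
  have hkey : (y * (starRingEnd ℂ) y - 1) *
      (x * (y * (starRingEnd ℂ) y + 1) + (x^2 - (α:ℂ)*x) * y) = 0 := by
    linear_combination (x*y^2) * hq2
      - ((x^2-(α:ℂ)*x)*(y*(starRingEnd ℂ) y)*y + y^2) * hc - hq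
  rcases mul_eq_zero.mp hkey with h | h
  · have h1 : (Complex.normSq y : ℂ) = 1 := by
      rw [← Complex.mul_conj]
      linear_combination h
    have h2 : Complex.normSq y = 1 := by exact_mod_cast h1
    have h3 : ‖y‖ ^ 2 = 1 := by rw [← Complex.normSq_eq_norm_sq]; exact h2
    nlinarith [norm_nonneg y]
  · exfalso
    have habs : ‖x * (y * (starRingEnd ℂ) y + 1)‖
        = ‖(x^2 - (α:ℂ)*x) * y‖ := by
      have : x * (y * (starRingEnd ℂ) y + 1) = -((x^2 - (α:ℂ)*x) * y) := by
        linear_combination h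
      rw [this, norm_neg]
    rw [norm_mul, norm_mul, hx, one_mul, Complex.mul_conj] at habs
    have h4 : ‖(Complex.normSq y : ℂ) + 1‖ = Complex.normSq y + 1 := by
      rw [show ((Complex.normSq y : ℂ) + 1) = ((Complex.normSq y + 1 : ℝ) : ℂ) by push_cast; ring,
        Complex.norm_real, Real.norm_eq_abs, abs_of_pos]
      have := Complex.normSq_nonneg y; linarith
    rw [h4] at habs
    have hylt : 0 < ‖y‖ := norm_pos_iff.mpr hy0
    have h5 : Complex.normSq y = ‖y‖ ^ 2 := Complex.normSq_eq_norm_sq y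
    nlinarith [sq_nonneg (‖y‖ - 1)]

private lemma absb_lt2' (α : ℝ) (hα1 : (-1:ℝ) < α) (hα2 : α < 3) (x : ℂ)
    (hx : ‖x‖ = 1)
    (hre : x.re = (α-1)/2) : ‖x^2 - (α:ℂ)*x‖ < 2 := by
  have hns : Complex.normSq x = 1 := by rw [← Complex.sq_norm, hx]; norm_num
  have him : x.im^2 = 1 - x.re^2 := by rw [Complex.normSq_apply] at hns; nlinarith
  have h1 : ‖x^2 - (α:ℂ)*x‖ = ‖x - (α:ℂ)‖ := by
    rw [show x^2 - (α:ℂ)*x = x*(x-(α:ℂ)) by ring, norm_mul, hx, one_mul]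
  have h2 : Complex.normSq (x - (α:ℂ)) = 1 + α := by
    rw [Complex.normSq_apply]
    simp only [Complex.sub_re, Complex.sub_im, Complex.ofReal_re, Complex.ofReal_im, sub_zero]
    nlinarith
  have h3 : ‖x - (α:ℂ)‖^2 = 1 + α := by rw [Complex.sq_norm, h2]
  rw [h1]
  nlinarith [norm_nonneg (x - (α:ℂ))]

theorem stmt_17 (α : ℝ) (hα : α ∈ Set.Ioo (-1:ℝ) 3) :
    {p : ℂ × ℂ | ‖p.1‖ = 1 ∧ ‖p.2‖ = 1 ∧
        p.2^2 + (p.1^2 - (α:ℂ)*p.1)*p.2 + p.1 = 0}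
      = {p : ℂ × ℂ |
          (p.1 = 1 ∨ p.1 = Complex.exp ((Real.arccos ((α-1)/2) : ℂ) * Complex.I)
            ∨ p.1 = Complex.exp (-(Real.arccos ((α-1)/2) : ℂ) * Complex.I)) ∧
          p.2^2 + (p.1^2 - (α:ℂ)*p.1)*p.2 + p.1 = 0} := by
  obtain ⟨hα1, hα2⟩ := hα
  set c : ℝ := Real.arccos ((α-1)/2) with hcdef
  set w : ℂ := Complex.exp ((c:ℂ) * Complex.I) with hwdef
  set w' : ℂ := Complex.exp (-(c:ℂ) * Complex.I) with hw'def
  have hcos : Real.cos c = (α-1)/2 := Real.cos_arccos (by linarith) (by linarith)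
  have hsum : w + w' = (α:ℂ) - 1 := by
    have h2 : Complex.cos (c:ℂ) = (((α-1)/2 : ℝ) : ℂ) := by
      rw [← Complex.ofReal_cos, hcos]
    rw [hwdef, hw'def, show -(c:ℂ) * Complex.I = (-(c:ℂ)) * Complex.I by ring,
      Complex.exp_mul_I, Complex.exp_mul_I, Complex.cos_neg, Complex.sin_neg]
    rw [show Complex.cos (c:ℂ) + Complex.sin (c:ℂ) * Complex.I
        + (Complex.cos (c:ℂ) + -Complex.sin (c:ℂ) * Complex.I)
        = 2 * Complex.cos (c:ℂ) by ring, h2]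
    push_cast
    ring
  have hprod : w * w' = 1 := by
    rw [hwdef, hw'def, ← Complex.exp_add]
    ring_nf
    exact Complex.exp_zero
  have hwabs : ‖w‖ = 1 := Complex.norm_exp_ofReal_mul_I c
  have hw'abs : ‖w'‖ = 1 := by
    rw [hw'def, show -(c:ℂ) = ((-c : ℝ) : ℂ) by push_cast; ring]
    exact Complex.norm_exp_ofReal_mul_I (-c)
  have hwre : w.re = (α-1)/2 := by
    rw [hwdef, Complex.exp_ofReal_mul_I_re, hcos]
  have hw're : w'.re = (α-1)/2 := by
    rw [hw'def, show -(c:ℂ) = ((-c : ℝ) : ℂ) by push_cast; ring,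
      Complex.exp_ofReal_mul_I_re, Real.cos_neg, hcos]
  have hwquad : w^2 + (1-(α:ℂ))*w + 1 = 0 := by
    linear_combination w * hsum - hprod
  have hw'quad : w'^2 + (1-(α:ℂ))*w' + 1 = 0 := by
    linear_combination w' * hsum - hprod
  ext p
  obtain ⟨x, y⟩ := p
  simp only [Set.mem_setOf_eq]
  constructor
  · rintro ⟨hx, hy, hq⟩
    refine ⟨?_, hq⟩
    have hy0 : y ≠ 0 := by
      intro h; rw [h] at hy; simp at hy
    have hxu : x * (starRingEnd ℂ) x = 1 := by
      rw [Complex.mul_conj]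
      norm_cast
      rw [Complex.normSq_eq_norm_sq, hx]; norm_num
    have hyv : y * (starRingEnd ℂ) y = 1 := by
      rw [Complex.mul_conj]
      norm_cast
      rw [Complex.normSq_eq_norm_sq, hy]; norm_num
    have hq2 : (starRingEnd ℂ) y ^ 2
        + ((starRingEnd ℂ) x ^ 2 - (α:ℂ) * (starRingEnd ℂ) x) * (starRingEnd ℂ) y
        + (starRingEnd ℂ) x = 0 := by
      have h := congrArg (starRingEnd ℂ) hq
      simpa [map_add, map_mul, map_pow, map_sub, Complex.conj_ofReal] using h
    have hT : (x^3 - (α:ℂ)*x^2 + (α:ℂ)*x - 1) * y = 0 := by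
      linear_combination x * hq - x^2*y^2 * hq2
        + (x^2*(y*((starRingEnd ℂ) y)+1) + (((starRingEnd ℂ) x)^2-(α:ℂ)*((starRingEnd ℂ) x))*x^2*y) * hyv
        + (x*(((starRingEnd ℂ) x)-(α:ℂ))*y + x*y^2 + y) * hxu
    have hcu : x^3 - (α:ℂ)*x^2 + (α:ℂ)*x - 1 = 0 :=
      (mul_eq_zero.mp hT).resolve_right hy0
    have hfac : (x - 1) * ((x - w) * (x - w')) = 0 := by
      linear_combination hcu + (-(x-1)*x) * hsum + (x-1) * hprod
    rcases mul_eq_zero.mp hfac with h | h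
    · exact Or.inl (sub_eq_zero.mp h)
    · rcases mul_eq_zero.mp h with h | h
      · exact Or.inr (Or.inl (sub_eq_zero.mp h))
      · exact Or.inr (Or.inr (sub_eq_zero.mp h))
  · rintro ⟨h1, hq⟩
    have hxabs : ‖x‖ = 1 := by
      rcases h1 with h | h | h <;> rw [h]
      · simp
      · exact hwabs
      · exact hw'abs
    refine ⟨hxabs, ?_, hq⟩
    have hcu : x^3 - (α:ℂ)*x^2 + (α:ℂ)*x - 1 = 0 := by
      rcases h1 with h | h | h <;> rw [h]
      · ring
      · linear_combination (w - 1) * hwquad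
      · linear_combination (w' - 1) * hw'quad
    have hb : ‖x^2 - (α:ℂ)*x‖ < 2 := by
      rcases h1 with h | h | h
      · rw [h, show (1:ℂ)^2 - (α:ℂ)*1 = ((1-α : ℝ) : ℂ) by push_cast; ring,
          Complex.norm_real, Real.norm_eq_abs]
        rw [abs_lt]
        constructor <;> linarith
      · rw [h]; exact absb_lt2' α hα1 hα2 w hwabs hwre
      · rw [h]; exact absb_lt2' α hα1 hα2 w' hw'abs hw're
    exact key_abs' α x y hxabs hcu hb hq
end

section
/- Let λ ∈ [1,2) and γ = (λ³-λ-2)/(2λ) + i·(λ+1)/(2λ)·√((2-λ)(λ³+λ-2)). Then |γ| = 1. Moreover, the nonzero roots of p_λ(x) = x(λ²-x)(x² + (4/λ - λ²)x + 4/λ²), namely λ² and (λ³-4 ± √(λ³(λ³-8)))/(2λ), all have absolute value strictly greater than 1 when λ ∈ (1,2). -/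
open Complex

lemma cpow_half_neg (r : ℝ) (hr : r ≤ 0) :
    ((r:ℂ)) ^ ((1:ℂ)/2) = (Real.sqrt (-r) : ℝ) * Complex.I := by
  rw [Complex.ofReal_cpow_of_nonpos hr]
  have h1 : (-(r:ℂ)) = (((-r : ℝ)):ℂ) := by push_cast; ring
  have h2 : ((1:ℂ)/2) = ((1/2 : ℝ) : ℂ) := by push_cast; ring
  rw [h1, h2, ← Complex.ofReal_cpow (by linarith) (1/2 : ℝ)]
  have h3 : (-r) ^ (1/2 : ℝ) = Real.sqrt (-r) := by
    rw [Real.sqrt_eq_rpow]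
  have h4 : Complex.exp (↑Real.pi * Complex.I * ((1/2:ℝ):ℂ)) = Complex.I := by
    have : (↑Real.pi * Complex.I * ((1/2:ℝ):ℂ)) = ((Real.pi/2 : ℝ):ℂ) * Complex.I := by
      push_cast; ring
    rw [this, Complex.exp_mul_I]
    push_cast
    simp [Complex.cos_ofReal_re, Real.cos_pi_div_two, Real.sin_pi_div_two]
  rw [h3, h4]

theorem stmt_19 :
    (∀ lam ∈ Set.Ico (1:ℝ) 2,
      norm (((lam^3 - lam - 2)/(2*lam) : ℝ) +
        ((lam + 1)/(2*lam) * Real.sqrt ((2 - lam)*(lam^3 + lam - 2)) : ℝ) * Complex.I) = 1) ∧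
    (∀ lam ∈ Set.Ioo (1:ℝ) 2,
      1 < norm ((lam:ℂ)^2) ∧
      1 < norm ((((lam:ℂ)^3 - 4) + ((lam:ℂ)^3*((lam:ℂ)^3 - 8)) ^ ((1:ℂ)/2))/(2*(lam:ℂ))) ∧
      1 < norm ((((lam:ℂ)^3 - 4) - ((lam:ℂ)^3*((lam:ℂ)^3 - 8)) ^ ((1:ℂ)/2))/(2*(lam:ℂ)))) := by
  constructor
  · rintro lam ⟨h1, h2⟩
    have hl : (0:ℝ) < lam := by linarith
    have hnn : (0:ℝ) ≤ (2 - lam)*(lam^3 + lam - 2) := by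
      apply mul_nonneg (by linarith)
      nlinarith [mul_nonneg (by linarith : (0:ℝ) ≤ lam - 1) (by nlinarith : (0:ℝ) ≤ lam^2 + lam + 2)]
    rw [Complex.norm_add_mul_I]
    have hs : Real.sqrt ((2-lam)*(lam^3+lam-2)) ^ 2 = (2-lam)*(lam^3+lam-2) :=
      Real.sq_sqrt hnn
    have key : ((lam^3 - lam - 2)/(2*lam))^2 +
        ((lam + 1)/(2*lam) * Real.sqrt ((2 - lam)*(lam^3 + lam - 2)))^2 = 1 := by
      have : ((lam + 1)/(2*lam) * Real.sqrt ((2 - lam)*(lam^3 + lam - 2)))^2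
          = ((lam+1)/(2*lam))^2 * ((2-lam)*(lam^3+lam-2)) := by
        rw [mul_pow, hs]
      rw [this]
      field_simp
      ring
    rw [key, Real.sqrt_one]
  · rintro lam ⟨h1, h2⟩
    have hl : (0:ℝ) < lam := by linarith
    set r : ℝ := lam^3*(lam^3 - 8) with hr_def
    have hr : r ≤ 0 := by
      rw [hr_def]
      apply mul_nonpos_of_nonneg_of_nonpos (by positivity)
      nlinarith [mul_nonneg (by linarith : (0:ℝ) ≤ 2 - lam) (by nlinarith : (0:ℝ) ≤ lam^2 + 2*lam + 4)]
    have hc : ((lam:ℂ)^3*((lam:ℂ)^3 - 8)) = ((r:ℝ):ℂ) := by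
      rw [hr_def]; push_cast; ring
    have hsq : Real.sqrt (-r) ^ 2 = -r := Real.sq_sqrt (by linarith)
    have hkey : (lam^3 - 4)^2 + (Real.sqrt (-r))^2 = 16 := by
      rw [hsq, hr_def]; ring
    refine ⟨?_, ?_, ?_⟩
    · rw [norm_pow, Complex.norm_real, Real.norm_eq_abs, abs_of_pos hl]
      nlinarith
    · rw [hc, cpow_half_neg r hr]
      have : ((lam:ℂ)^3 - 4) + (Real.sqrt (-r) : ℝ) * Complex.I
          = (((lam^3 - 4 : ℝ)):ℂ) + ((Real.sqrt (-r) : ℝ):ℂ) * Complex.I := by push_cast; ring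
      rw [this, norm_div, Complex.norm_add_mul_I]
      have habs2 : ‖2*(lam:ℂ)‖ = 2*lam := by
        rw [norm_mul, Complex.norm_two, Complex.norm_real, Real.norm_eq_abs, abs_of_pos hl]
      rw [habs2, hkey]
      have : Real.sqrt 16 = 4 := by
        rw [show (16:ℝ) = 4^2 by norm_num, Real.sqrt_sq (by norm_num)]
      rw [this]
      rw [lt_div_iff₀ (by linarith)]
      linarith
    · rw [hc, cpow_half_neg r hr]
      have : ((lam:ℂ)^3 - 4) - (Real.sqrt (-r) : ℝ) * Complex.I
          = (((lam^3 - 4 : ℝ)):ℂ) + (((-Real.sqrt (-r) : ℝ)):ℂ) * Complex.I := by push_cast; ring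
      rw [this, norm_div, Complex.norm_add_mul_I]
      have habs2 : ‖2*(lam:ℂ)‖ = 2*lam := by
        rw [norm_mul, Complex.norm_two, Complex.norm_real, Real.norm_eq_abs, abs_of_pos hl]
      rw [habs2, neg_pow, show ((-1:ℝ))^2 = 1 by norm_num, one_mul, hkey]
      have : Real.sqrt 16 = 4 := by
        rw [show (16:ℝ) = 4^2 by norm_num, Real.sqrt_sq (by norm_num)]
      rw [this]
      rw [lt_div_iff₀ (by linarith)]
      linarith
end
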